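/- Cayley's formula satisfies the partition recurrence: define f(r,k) := (1/(r+1))·C(r+k, k)·C(r−1, k−1) ∈ ℚ for integers r, k ≥ 1. Then f(r,1) = 1 for all r ≥ 1, and for all r ≥ 1 and k ≥ 2, 2(k−1)·f(r,k) = (r+2)·∑_{ℓ=1}^{k−1} ∑_{m=ℓ}^{r−1} f(r−m, k−ℓ)·f(m, ℓ). (Thus f(r,k) is Cayley's count of the partitions of a convex (r+2)-gon into k parts by k−1 noncrossing diagonals.) -/

import Mathlib

/-- Cayley's formula `f(r,k) = (1/(r+1))·C(r+k,k)·C(r-1,k-1)`. -/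
def cayley (r k : ℕ) : ℚ :=
  (1 / ((r : ℚ) + 1)) * (((r + k).choose k : ℕ) : ℚ) * (((r - 1).choose (k - 1) : ℕ) : ℚ)

section CayleyAux

open PowerSeries Finset Polynomial

noncomputable def cayB : ℕ → Polynomial ℚ
  | 0 => 0
  | n + 1 =>
      (1 + Polynomial.X) * ∑ p ∈ (antidiagonal n).attach, cayB p.1.1 * cayB p.1.2
        + (1 + 2 * Polynomial.X) * cayB n + (if n = 0 then Polynomial.X else 0)
  decreasing_by
  · exact Nat.lt_succ_of_le (Finset.HasAntidiagonal.antidiagonal.fst_le p.2)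
  · exact Nat.lt_succ_of_le (Finset.HasAntidiagonal.antidiagonal.snd_le p.2)
  · exact Nat.lt_succ_self n

lemma cayB_succ (n : ℕ) :
    cayB (n + 1) = (1 + Polynomial.X) * ∑ p ∈ antidiagonal n, cayB p.1 * cayB p.2
      + (1 + 2 * Polynomial.X) * cayB n + (if n = 0 then Polynomial.X else 0) := by
  rw [cayB]
  congr 2
  · rw [← Finset.sum_attach (antidiagonal n) (fun p => cayB p.1 * cayB p.2)]

noncomputable def cayG : PowerSeries (Polynomial ℚ) := PowerSeries.mk cayB

lemma cayG_eq : cayG = PowerSeries.X *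
    (PowerSeries.C (1 + Polynomial.X) * cayG ^ 2
      + PowerSeries.C (1 + 2 * Polynomial.X) * cayG
      + PowerSeries.C Polynomial.X) := by
  apply PowerSeries.ext
  intro n
  cases n with
  | zero =>
      simp [cayG, cayB, PowerSeries.coeff_zero_eq_constantCoeff]
  | succ n =>
      set a : Polynomial ℚ := 1 + Polynomial.X with ha
      set b : Polynomial ℚ := 1 + 2 * Polynomial.X with hb
      rw [PowerSeries.coeff_succ_X_mul, map_add, map_add, PowerSeries.coeff_C_mul,
        PowerSeries.coeff_C_mul, PowerSeries.coeff_C, sq, PowerSeries.coeff_mul]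
      simp only [cayG, PowerSeries.coeff_mk]
      rw [cayB_succ]

/-- Closed form for the coefficients of `cayG ^ j` (Lagrange inversion). -/
noncomputable def cf (j r k : ℕ) : ℚ :=
  if r = 0 then (if j = 0 ∧ k = 0 then 1 else 0)
  else if k < j then 0
  else (j : ℚ) / (r : ℚ) * ((r.choose k : ℕ) : ℚ) * (((r + k).choose (k - j) : ℕ) : ℚ)

lemma cayG_pow_eq (i : ℕ) : cayG ^ (i + 1) = PowerSeries.X *
    (PowerSeries.C (1 + Polynomial.X) * cayG ^ (i + 2)
      + PowerSeries.C (1 + 2 * Polynomial.X) * cayG ^ (i + 1)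
      + PowerSeries.C Polynomial.X * cayG ^ i) := by
  conv_lhs => rw [pow_succ']
  nth_rewrite 1 [cayG_eq]
  ring

lemma cf_zero_of_lt {j r k : ℕ} (h : k < j) : cf j r k = 0 := by
  unfold cf
  rcases r with _ | r
  · have : ¬(j = 0 ∧ k = 0) := by omega
    simp [this]
  · rw [if_neg (Nat.succ_ne_zero r), if_pos h]

lemma cf_succ (j r k : ℕ) (h : j ≤ k) :
    cf j (r+1) k = (j : ℚ) / ((r:ℚ) + 1) * (((r+1).choose k : ℕ) : ℚ)
      * (((r + 1 + k).choose (k - j) : ℕ) : ℚ) := by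
  unfold cf
  rw [if_neg (Nat.succ_ne_zero r), if_neg (by omega : ¬ k < j)]
  push_cast
  ring

lemma cfkey_case0 (i k : ℕ) :
    cf (i + 1) (0 + 1) (k + 1) =
      cf (i + 2) 0 (k + 1) + cf (i + 1) 0 (k + 1)
        + cf (i + 2) 0 k + 2 * cf (i + 1) 0 k + cf i 0 k := by
  rcases k with _ | k
  · rcases i with _ | i
    · norm_num [cf]
    · rw [cf_zero_of_lt (by omega), cf_zero_of_lt (by omega), cf_zero_of_lt (by omega),
        cf_zero_of_lt (by omega), cf_zero_of_lt (by omega)]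
      simp [cf]
  · rcases Nat.lt_or_ge (k+1) i with h | h
    · rw [cf_zero_of_lt (by omega), cf_zero_of_lt (by omega), cf_zero_of_lt (by omega),
        cf_zero_of_lt (by omega), cf_zero_of_lt (by omega), cf_zero_of_lt (by omega)]
      ring
    · -- i ≤ k+1, k+1 ≥ 1 so C(1,k+2) = 0
      rw [cf_succ (i+1) 0 (k+2) (by omega)]
      rw [show ((1:ℕ).choose (k+2)) = 0 from Nat.choose_eq_zero_of_lt (by omega)]
      simp only [cf]
      norm_num

lemma cfkey_caseA (i m : ℕ) :
    cf (i+1) (m+1+1) (i+1) = cf (i+2) (m+1) (i+1) + cf (i+1) (m+1) (i+1)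
      + cf (i+2) (m+1) i + 2 * cf (i+1) (m+1) i + cf i (m+1) i := by
  rw [cf_zero_of_lt (show i+1 < i+2 by omega), cf_zero_of_lt (show i < i+2 by omega),
      cf_zero_of_lt (show i < i+1 by omega)]
  rw [cf_succ (i+1) (m+1) (i+1) le_rfl, cf_succ (i+1) m (i+1) le_rfl, cf_succ i m i le_rfl]
  simp only [Nat.sub_self, Nat.choose_zero_right, Nat.cast_one, mul_one]
  have hm1 : ((m:ℚ)+1) ≠ 0 := by positivity
  have hm2 : ((m:ℚ)+1+1) ≠ 0 := by positivity
  rcases i with _ | t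
  · simp only [Nat.cast_zero, Nat.cast_one, zero_div, zero_mul, Nat.choose_one_right]
    push_cast
    field_simp
    simp only [Nat.choose_one_right]
    push_cast
    ring
  · have h1q : ((m:ℚ)+2) * ((m+1).choose (t+1) : ℕ) = ((m+2).choose (t+2) : ℕ) * ((t:ℚ)+2) := by
      exact_mod_cast congrArg (Nat.cast (R := ℚ)) (Nat.add_one_mul_choose_eq (m+1) (t+1))
    have h2q : ((m:ℚ)+1) * (m.choose (t+1) : ℕ) = ((m+1).choose (t+2) : ℕ) * ((t:ℚ)+2) := by
      exact_mod_cast congrArg (Nat.cast (R := ℚ)) (Nat.add_one_mul_choose_eq m (t+1))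
    have h3q : ((m:ℚ)+1) * (m.choose t : ℕ) = ((m+1).choose (t+1) : ℕ) * ((t:ℚ)+1) := by
      exact_mod_cast congrArg (Nat.cast (R := ℚ)) (Nat.add_one_mul_choose_eq m t)
    have p2q : (((m+1).choose (t+1) : ℕ) : ℚ) = (m.choose t : ℕ) + (m.choose (t+1) : ℕ) := by
      exact_mod_cast congrArg (Nat.cast (R := ℚ)) (Nat.choose_succ_succ m t)
    push_cast
    push_cast at h1q h2q h3q p2q
    field_simp
    linear_combination (-((m:ℚ)+1))*h1q + ((m:ℚ)+2)*h2q + ((m:ℚ)+2)*h3q + ((m:ℚ)+1)*((m:ℚ)+2)*p2q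

lemma succ_mul_choose_q (a b : ℕ) :
    ((a:ℚ)+1) * ((a.choose b : ℕ) : ℚ) = (((a+1).choose (b+1) : ℕ) : ℚ) * ((b:ℚ)+1) := by
  have h := congrArg (Nat.cast (R := ℚ)) (Nat.add_one_mul_choose_eq a b)
  push_cast [Nat.succ_eq_add_one] at h
  linarith

lemma pascal_q (a b : ℕ) :
    (((a+1).choose (b+1) : ℕ) : ℚ) = ((a.choose b : ℕ) : ℚ) + ((a.choose (b+1) : ℕ) : ℚ) := by
  exact_mod_cast congrArg (Nat.cast (R := ℚ)) (Nat.choose_succ_succ a b)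

lemma cfkey_caseB (i m : ℕ) :
    cf (i+1) (m+1+1) (i+2) = cf (i+2) (m+1) (i+2) + cf (i+1) (m+1) (i+2)
      + cf (i+2) (m+1) (i+1) + 2 * cf (i+1) (m+1) (i+1) + cf i (m+1) (i+1) := by
  rw [cf_zero_of_lt (show i+1 < i+2 by omega)]
  rw [cf_succ (i+1) (m+1) (i+2) (by omega), cf_succ (i+2) m (i+2) (by omega),
    cf_succ (i+1) m (i+2) (by omega), cf_succ (i+1) m (i+1) (by omega),
    cf_succ i m (i+1) (by omega)]
  simp only [show m+1+1 = m+2 by omega, show (i+2)-(i+1) = 1 by omega,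
    show (i+2)-(i+2) = 0 by omega, show (i+1)-(i+1) = 0 by omega,
    show (i+1)-i = 1 by omega, show m+1+1+(i+2) = m+i+4 by omega,
    show m+1+(i+2) = m+i+3 by omega, show m+1+(i+1) = m+i+2 by omega,
    Nat.choose_zero_right, Nat.choose_one_right, Nat.cast_one, mul_one]
  have R1q : ((m:ℚ)+2) * (((m+1).choose (i+1) : ℕ) : ℚ)
      = (((m+2).choose (i+2) : ℕ) : ℚ) * ((i:ℚ)+2) := by
    have h := succ_mul_choose_q (m+1) (i+1)
    push_cast at h ⊢
    linarith
  have P1q : (((m+2).choose (i+2) : ℕ) : ℚ)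
      = (((m+1).choose (i+1) : ℕ) : ℚ) + (((m+1).choose (i+2) : ℕ) : ℚ) := pascal_q (m+1) (i+1)
  rw [P1q] at R1q ⊢
  have hm1 : ((m:ℚ)+1) ≠ 0 := by positivity
  have hm2 : ((m:ℚ)+2) ≠ 0 := by positivity
  push_cast
  field_simp
  linear_combination ((m:ℚ)+(i:ℚ)+3) * R1q

lemma cfkey_caseC (i m d : ℕ) :
    cf (i+1) (m+1+1) (i+d+3) = cf (i+2) (m+1) (i+d+3) + cf (i+1) (m+1) (i+d+3)
      + cf (i+2) (m+1) (i+d+2) + 2 * cf (i+1) (m+1) (i+d+2) + cf i (m+1) (i+d+2) := by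
  rw [cf_succ (i+1) (m+1) (i+d+3) (by omega), cf_succ (i+2) m (i+d+3) (by omega),
    cf_succ (i+1) m (i+d+3) (by omega), cf_succ (i+2) m (i+d+2) (by omega),
    cf_succ (i+1) m (i+d+2) (by omega), cf_succ i m (i+d+2) (by omega)]
  simp only [show m+1+1 = m+2 by omega, show (i+d+3)-(i+1) = d+2 by omega,
    show (i+d+3)-(i+2) = d+1 by omega, show (i+d+2)-(i+2) = d by omega,
    show (i+d+2)-(i+1) = d+1 by omega, show (i+d+2)-i = d+2 by omega,
    show m+1+1+(i+d+3) = m+(i+(d+5)) by omega,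
    show m+1+(i+d+3) = m+(i+(d+4)) by omega,
    show m+1+(i+d+2) = m+(i+(d+3)) by omega]
  have R1q : ((m:ℚ)+2) * (((m+1).choose (i+d+2) : ℕ) : ℚ)
      = (((m+2).choose (i+d+3) : ℕ) : ℚ) * ((i:ℚ)+(d:ℚ)+3) := by
    have h := succ_mul_choose_q (m+1) (i+d+2)
    push_cast at h ⊢
    linarith
  have R2q : ((m:ℚ)+(i:ℚ)+(d:ℚ)+4) * (((m+(i+(d+3))).choose (d+1) : ℕ) : ℚ)
      = (((m+(i+(d+4))).choose (d+2) : ℕ) : ℚ) * ((d:ℚ)+2) := by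
    have h := succ_mul_choose_q (m+(i+(d+3))) (d+1)
    rw [show m+(i+(d+3))+1 = m+(i+(d+4)) by omega] at h
    push_cast at h ⊢
    linarith
  have R3q : ((m:ℚ)+(i:ℚ)+(d:ℚ)+4) * (((m+(i+(d+3))).choose d : ℕ) : ℚ)
      = (((m+(i+(d+4))).choose (d+1) : ℕ) : ℚ) * ((d:ℚ)+1) := by
    have h := succ_mul_choose_q (m+(i+(d+3))) d
    rw [show m+(i+(d+3))+1 = m+(i+(d+4)) by omega] at h
    push_cast at h ⊢
    linarith
  have P1q : (((m+2).choose (i+d+3) : ℕ) : ℚ)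
      = (((m+1).choose (i+d+2) : ℕ) : ℚ) + (((m+1).choose (i+d+3) : ℕ) : ℚ) := by
    have h := pascal_q (m+1) (i+d+2)
    rw [show m+1+1 = m+2 by omega, show i+d+2+1 = i+d+3 by omega] at h
    exact h
  have P2q : (((m+(i+(d+4))).choose (d+2) : ℕ) : ℚ)
      = (((m+(i+(d+3))).choose (d+1) : ℕ) : ℚ) + (((m+(i+(d+3))).choose (d+2) : ℕ) : ℚ) := by
    have h := pascal_q (m+(i+(d+3))) (d+1)
    rw [show m+(i+(d+3))+1 = m+(i+(d+4)) by omega] at h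
    exact h
  have P3q : (((m+(i+(d+4))).choose (d+1) : ℕ) : ℚ)
      = (((m+(i+(d+3))).choose d : ℕ) : ℚ) + (((m+(i+(d+3))).choose (d+1) : ℕ) : ℚ) := by
    have h := pascal_q (m+(i+(d+3))) d
    rw [show m+(i+(d+3))+1 = m+(i+(d+4)) by omega] at h
    exact h
  have P4q : (((m+(i+(d+5))).choose (d+2) : ℕ) : ℚ)
      = (((m+(i+(d+4))).choose (d+1) : ℕ) : ℚ) + (((m+(i+(d+4))).choose (d+2) : ℕ) : ℚ) := by
    have h := pascal_q (m+(i+(d+4))) (d+1)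
    rw [show m+(i+(d+4))+1 = m+(i+(d+5)) by omega] at h
    exact h
  rw [P2q] at R2q
  rw [P3q] at R3q
  rw [P1q] at R1q ⊢
  rw [P4q, P2q, P3q]
  have hm1 : ((m:ℚ)+1) ≠ 0 := by positivity
  have hm2 : ((m:ℚ)+2) ≠ 0 := by positivity
  push_cast
  -- (casts already normalized)
  field_simp
  linear_combination
    ((((m+(i+(d+3))).choose (d+2) : ℕ) : ℚ) + (((m+(i+(d+3))).choose (d+1) : ℕ) : ℚ)) * R1q
    - ((((m+1).choose (i+d+3) : ℕ) : ℚ) + (((m+1).choose (i+d+2) : ℕ) : ℚ)) * R2q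
    - ((((m+1).choose (i+d+3) : ℕ) : ℚ) + (((m+1).choose (i+d+2) : ℕ) : ℚ)) * R3q

lemma cf_key (i n k : ℕ) :
    cf (i + 1) (n + 1) (k + 1) =
      cf (i + 2) n (k + 1) + cf (i + 1) n (k + 1)
        + cf (i + 2) n k + 2 * cf (i + 1) n k + cf i n k := by
  rcases n with _ | m
  · exact cfkey_case0 i k
  · rcases Nat.lt_or_ge k i with h | h
    · rw [cf_zero_of_lt (by omega), cf_zero_of_lt (by omega), cf_zero_of_lt (by omega),
        cf_zero_of_lt (by omega), cf_zero_of_lt (by omega), cf_zero_of_lt (by omega)]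
      ring
    · obtain ⟨e, rfl⟩ : ∃ e, k = i + e := ⟨k - i, by omega⟩
      rcases e with _ | _ | d
      · exact cfkey_caseA i m
      · exact cfkey_caseB i m
      · exact cfkey_caseC i m d

lemma coeff_comb (p q s : Polynomial ℚ) (t : ℕ) :
    ((1 + Polynomial.X) * p + (1 + 2 * Polynomial.X) * q + Polynomial.X * s).coeff t =
      p.coeff t + (Polynomial.X * p).coeff t + q.coeff t
        + 2 * ((Polynomial.X * q).coeff t) + (Polynomial.X * s).coeff t := by
  have h : (1 + Polynomial.X) * p + (1 + 2 * Polynomial.X) * q + Polynomial.X * s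
      = p + Polynomial.X * p + q + Polynomial.C 2 * (Polynomial.X * q) + Polynomial.X * s := by
    rw [map_ofNat Polynomial.C 2]; ring
  rw [h]; simp [Polynomial.coeff_add, Polynomial.coeff_C_mul]

lemma coeff_cayG_pow : ∀ r j k : ℕ,
    ((PowerSeries.coeff r (cayG ^ j)).coeff k) = cf j r k := by
  intro r
  induction r using Nat.strong_induction_on with
  | _ r IH =>
    intro j k
    match j with
    | 0 =>
        rw [pow_zero]
        rcases r with _ | r
        · simp only [PowerSeries.coeff_one, if_pos rfl, cf]
          by_cases hk : k = 0 <;> simp [hk, Polynomial.coeff_one]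
        · simp [PowerSeries.coeff_one, cf]
    | (i+1) =>
        rcases r with _ | n
        · rw [PowerSeries.coeff_zero_eq_constantCoeff, map_pow]
          have h0 : constantCoeff cayG = 0 := by
            simp [cayG, cayB, ← PowerSeries.coeff_zero_eq_constantCoeff]
          rw [h0, zero_pow (Nat.succ_ne_zero i)]
          simp [cf]
        · rw [cayG_pow_eq i, PowerSeries.coeff_succ_X_mul, map_add, map_add,
            PowerSeries.coeff_C_mul, PowerSeries.coeff_C_mul, PowerSeries.coeff_C_mul,
            coeff_comb]
          have e2 := IH n (Nat.lt_succ_self n) (i+2)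
          have e1 := IH n (Nat.lt_succ_self n) (i+1)
          have e0 := IH n (Nat.lt_succ_self n) i
          rcases k with _ | k
          · rw [Polynomial.mul_coeff_zero, Polynomial.mul_coeff_zero, Polynomial.mul_coeff_zero]
            simp only [Polynomial.coeff_X_zero, zero_mul, mul_zero, add_zero]
            rw [e2 0, e1 0]
            rcases n with _ | n <;> simp [cf]
          · rw [Polynomial.coeff_X_mul, Polynomial.coeff_X_mul, Polynomial.coeff_X_mul,
              e2 (k+1), e2 k, e1 (k+1), e1 k, e0 k]
            rw [cf_key i n k]
            ring
lemma choose_right_q (a b c : ℕ) (h : a - b = c) :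
    ((a.choose (b+1) : ℕ) : ℚ) * ((b:ℚ)+1) = ((a.choose b : ℕ) : ℚ) * (c:ℚ) := by
  have h2 := congrArg (Nat.cast (R := ℚ)) (Nat.choose_succ_right_eq a b)
  rw [h] at h2
  push_cast at h2 ⊢
  linarith

lemma cayley_eq_cf1 (r k : ℕ) : cf 1 (r+1) (k+1) = cayley (r+1) (k+1) := by
  rw [cf_succ 1 r (k+1) (by omega)]
  unfold cayley
  simp only [show (k+1) - 1 = k by omega, show (r+1) - 1 = r by omega,
    show r+1+(k+1) = r+k+2 by omega]
  have h1 := succ_mul_choose_q r k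
  have h2 := choose_right_q (r+k+2) k (r+2) (by omega)
  have hr1 : ((r:ℚ)+1) ≠ 0 := by positivity
  have hr2 : ((r:ℚ)+2) ≠ 0 := by positivity
  push_cast at h1 h2 ⊢
  field_simp
  linear_combination (-(((r+k+2).choose (k+1) : ℕ) : ℚ)) * h1
    - (((r+1).choose (k+1) : ℕ) : ℚ) * h2

lemma final_identity (R K : ℕ) :
    ((R:ℚ)+1+2) * cf 2 (R+1) (K+2) = 2*((K:ℚ)+2-1) * cayley (R+1) (K+2) := by
  rw [cf_succ 2 R (K+2) (by omega)]
  unfold cayley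
  simp only [show (K+2) - 1 = K+1 by omega, show (R+1) - 1 = R by omega,
    show R+1+(K+2) = R+K+3 by omega, show (K+2) - 2 = K by omega]
  have h1 := succ_mul_choose_q R (K+1)
  have h2 := choose_right_q (R+K+3) K (R+3) (by omega)
  have h3 := choose_right_q (R+K+3) (K+1) (R+2) (by omega)
  have hr1 : ((R:ℚ)+1) ≠ 0 := by positivity
  have hr2 : ((R:ℚ)+2) ≠ 0 := by positivity
  push_cast at h1 h2 h3 ⊢
  field_simp
  linear_combination (-((K:ℚ)+1)*(((R+K+3).choose (K+2) : ℕ) : ℚ)) * h1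
    - (((R:ℚ)+2)*(((R+1).choose (K+2) : ℕ) : ℚ)) * h2
    - (((K:ℚ)+1)*(((R+1).choose (K+2) : ℕ) : ℚ)) * h3
lemma cf1_zero_left (c : ℕ) : cf 1 0 c = 0 := by simp [cf]

lemma cf1_zero_right (a : ℕ) : cf 1 a 0 = 0 := by
  rcases a with _ | a
  · simp [cf]
  · exact cf_zero_of_lt (by omega)

lemma cf1_zero_of_gt {a c : ℕ} (h : a < c) : cf 1 a c = 0 := by
  rcases a with _ | a
  · simp [cf]
  · rcases c with _ | c
    · omega
    · rw [cf_succ 1 a (c+1) (by omega),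
        Nat.choose_eq_zero_of_lt (by omega : a + 1 < c + 1)]
      simp

lemma coeff_cayG_one : ∀ a c : ℕ, ((PowerSeries.coeff a cayG).coeff c) = cf 1 a c := by
  intro a c
  have h := coeff_cayG_pow a 1 c
  rwa [pow_one] at h

lemma sum_eq (r k : ℕ) (hr : 1 ≤ r) (hk : 1 ≤ k) :
    (∑ ℓ ∈ Finset.Icc 1 (k-1), ∑ m ∈ Finset.Icc ℓ (r-1),
      cayley (r-m) (k-ℓ) * cayley m ℓ) = cf 2 r k := by
  have hc : cf 2 r k
      = ∑ a ∈ Finset.range (r+1), ∑ c ∈ Finset.range (k+1),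
          cf 1 a c * cf 1 (r-a) (k-c) := by
    rw [← coeff_cayG_pow r 2 k, sq, PowerSeries.coeff_mul, Polynomial.finset_sum_coeff,
      Finset.Nat.sum_antidiagonal_eq_sum_range_succ_mk]
    apply Finset.sum_congr rfl
    intro a _
    rw [Polynomial.coeff_mul, Finset.Nat.sum_antidiagonal_eq_sum_range_succ_mk]
    apply Finset.sum_congr rfl
    intro c _
    rw [coeff_cayG_one, coeff_cayG_one]
  rw [hc]
  -- replace cayley by cf 1 inside the Icc sums
  have step1 : (∑ ℓ ∈ Finset.Icc 1 (k-1), ∑ m ∈ Finset.Icc ℓ (r-1),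
      cayley (r-m) (k-ℓ) * cayley m ℓ)
      = ∑ ℓ ∈ Finset.Icc 1 (k-1), ∑ m ∈ Finset.Icc ℓ (r-1),
          cf 1 (r-m) (k-ℓ) * cf 1 m ℓ := by
    apply Finset.sum_congr rfl
    intro ℓ hℓ
    apply Finset.sum_congr rfl
    intro m hm
    simp only [Finset.mem_Icc] at hℓ hm
    obtain ⟨a', ha'⟩ : ∃ a', r - m = a' + 1 := ⟨r - m - 1, by omega⟩
    obtain ⟨c', hc'⟩ : ∃ c', k - ℓ = c' + 1 := ⟨k - ℓ - 1, by omega⟩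
    obtain ⟨m', hm'⟩ : ∃ m', m = m' + 1 := ⟨m - 1, by omega⟩
    obtain ⟨l', hl'⟩ : ∃ l', ℓ = l' + 1 := ⟨ℓ - 1, by omega⟩
    rw [ha', hc', hm', hl', cayley_eq_cf1, cayley_eq_cf1]
  rw [step1]
  -- extend inner sums to range (r+1)
  have step2 : ∀ ℓ ∈ Finset.Icc 1 (k-1),
      (∑ m ∈ Finset.Icc ℓ (r-1), cf 1 (r-m) (k-ℓ) * cf 1 m ℓ)
      = ∑ m ∈ Finset.range (r+1), cf 1 (r-m) (k-ℓ) * cf 1 m ℓ := by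
    intro ℓ hℓ
    simp only [Finset.mem_Icc] at hℓ
    apply Finset.sum_subset
    · intro m hm
      simp only [Finset.mem_Icc] at hm
      simp only [Finset.mem_range]
      omega
    · intro m hm hnot
      simp only [Finset.mem_range] at hm
      simp only [Finset.mem_Icc] at hnot
      rcases Nat.lt_or_ge m ℓ with h | h
      · rw [cf1_zero_of_gt h, mul_zero]
      · have : m = r := by omega
        rw [this, Nat.sub_self, cf1_zero_left, zero_mul]
  rw [Finset.sum_congr rfl step2]
  -- extend outer sum to range (k+1)
  have step3 : (∑ ℓ ∈ Finset.Icc 1 (k-1),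
      ∑ m ∈ Finset.range (r+1), cf 1 (r-m) (k-ℓ) * cf 1 m ℓ)
      = ∑ ℓ ∈ Finset.range (k+1), ∑ m ∈ Finset.range (r+1),
          cf 1 (r-m) (k-ℓ) * cf 1 m ℓ := by
    apply Finset.sum_subset
    · intro ℓ hℓ
      simp only [Finset.mem_Icc] at hℓ
      simp only [Finset.mem_range]
      omega
    · intro ℓ hℓ hnot
      simp only [Finset.mem_range] at hℓ
      simp only [Finset.mem_Icc] at hnot
      apply Finset.sum_eq_zero
      intro m _
      rcases Nat.eq_zero_or_pos ℓ with h | h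
      · rw [h, cf1_zero_right, mul_zero]
      · have : ℓ = k := by omega
        rw [this, Nat.sub_self, cf1_zero_right, zero_mul]
  rw [step3]
  -- reflect the inner index
  have step4 : ∀ ℓ, (∑ m ∈ Finset.range (r+1), cf 1 (r-m) (k-ℓ) * cf 1 m ℓ)
      = ∑ m ∈ Finset.range (r+1), cf 1 m (k-ℓ) * cf 1 (r-m) ℓ := by
    intro ℓ
    rw [← Finset.sum_range_reflect]
    apply Finset.sum_congr rfl
    intro m hm
    simp only [Finset.mem_range] at hm
    rw [show r + 1 - 1 - m = r - m by omega, show r - (r - m) = m by omega]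
  simp only [step4]
  -- reflect the outer index
  rw [← Finset.sum_range_reflect]
  have step5 : ∀ c ∈ Finset.range (k+1),
      (∑ m ∈ Finset.range (r+1), cf 1 m (k-(k+1-1-c)) * cf 1 (r-m) (k+1-1-c))
      = ∑ m ∈ Finset.range (r+1), cf 1 m c * cf 1 (r-m) (k-c) := by
    intro c hc2
    simp only [Finset.mem_range] at hc2
    apply Finset.sum_congr rfl
    intro m _
    rw [show k + 1 - 1 - c = k - c by omega, show k - (k - c) = c by omega]
  rw [Finset.sum_congr rfl step5, Finset.sum_comm]
end CayleyAux

/-- Cayley's formula satisfies the polygon-partition recurrence. -/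
theorem cayley_recurrence :
    (∀ r : ℕ, 1 ≤ r → cayley r 1 = 1) ∧
    (∀ r k : ℕ, 1 ≤ r → 2 ≤ k →
      2 * ((k : ℚ) - 1) * cayley r k =
        ((r : ℚ) + 2) *
          ∑ ℓ ∈ Finset.Icc 1 (k - 1), ∑ m ∈ Finset.Icc ℓ (r - 1),
            cayley (r - m) (k - ℓ) * cayley m ℓ) := by
  constructor
  · intro r hr
    obtain ⟨m, rfl⟩ : ∃ m, r = m + 1 := ⟨r - 1, by omega⟩
    have hm : ((m:ℚ)+1+1) ≠ 0 := by positivity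
    simp only [cayley, Nat.add_sub_cancel, Nat.choose_one_right, Nat.choose_zero_right]
    push_cast
    field_simp
    simp
  · intro r k hr hk
    obtain ⟨R, rfl⟩ : ∃ R, r = R + 1 := ⟨r - 1, by omega⟩
    obtain ⟨K, rfl⟩ : ∃ K, k = K + 2 := ⟨k - 2, by omega⟩
    rw [sum_eq (R+1) (K+2) (by omega) (by omega)]
    have h := final_identity R K
    push_cast at h ⊢
    linarith
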